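/- Let (u, r, e) be a solution of the Yang monopole equations of motion on an open interval I, with associated position curve x : I → ℝ⁵∖{0} and vector L : I → ℝ⁵. Then for all t ∈ I, ⟨x(t), L(t)⟩ = (|e(t)|²/4) · |x(t)|; in particular, when L ≠ 0, the cosine of the angle between x(t) and L, namely ⟨x(t), L⟩/(|x(t)||L|) = |e|²/(4|L|), is constant, so x(I) lies on a cone with vertex at the origin directed along L. -/

import Mathlib

open scoped InnerProductSpace

noncomputable section

/-- The 4×4 matrix `E` (built from the charge vector `e ∈ ℝ³`, with rows
`(0, e¹, e², e³)`, `(−e¹, 0, −e³, e²)`, `(−e², e³, 0, −e¹)`, `(−e³, −e², e¹, 0)`)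
applied to `w ∈ ℝ⁴`. -/
def Eop (e : EuclideanSpace ℝ (Fin 3)) (w : EuclideanSpace ℝ (Fin 4)) :
    EuclideanSpace ℝ (Fin 4) :=
  (WithLp.equiv 2 (Fin 4 → ℝ)).symm
    ![e 0 * w 1 + e 1 * w 2 + e 2 * w 3,
      -(e 0) * w 0 - e 2 * w 2 + e 1 * w 3,
      -(e 1) * w 0 + e 2 * w 1 - e 0 * w 3,
      -(e 2) * w 0 - e 1 * w 1 + e 0 * w 2]

/-- The 3×4 matrix `A` (with rows `A₁ = (−u₂, u₁, u₄, −u₃)/(|u|²+1)`,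
`A₂ = (−u₃, −u₄, u₁, u₂)/(|u|²+1)`, `A₃ = (−u₄, u₃, −u₂, u₁)/(|u|²+1)`) applied to
`w ∈ ℝ⁴`, giving `(⟨A₁, w⟩, ⟨A₂, w⟩, ⟨A₃, w⟩) ∈ ℝ³`. -/
def Aop (u w : EuclideanSpace ℝ (Fin 4)) : EuclideanSpace ℝ (Fin 3) :=
  (‖u‖ ^ 2 + 1)⁻¹ • (WithLp.equiv 2 (Fin 3 → ℝ)).symm
    ![-(u 1) * w 0 + u 0 * w 1 + u 3 * w 2 - u 2 * w 3,
      -(u 2) * w 0 - u 3 * w 1 + u 0 * w 2 + u 1 * w 3,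
      -(u 3) * w 0 + u 2 * w 1 - u 1 * w 2 + u 0 * w 3]

/-- The antisymmetric 3×3 matrix `B` (with rows `(0, −B₃, B₂)`, `(B₃, 0, −B₁)`,
`(−B₂, B₁, 0)`, built from `b = (B₁, B₂, B₃) = A u̇`) applied to `e ∈ ℝ³`. -/
def Bop (b e : EuclideanSpace ℝ (Fin 3)) : EuclideanSpace ℝ (Fin 3) :=
  (WithLp.equiv 2 (Fin 3 → ℝ)).symm
    ![-(b 2) * e 1 + b 1 * e 2,
      b 2 * e 0 - b 0 * e 2,
      -(b 1) * e 0 + b 0 * e 1]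

/-- `(u, r, e)` (with derivatives `u', u''`, `r', r''`, `e'`) is a solution of the Yang
monopole equations of motion on `I` (the Poincaré problem in `ℝ⁵`, in stereographic
coordinates): `u : I → ℝ⁴` and `r : I → (0, ∞)` are twice continuously differentiable,
`e : I → ℝ³` is continuously differentiable, and the three equations of motion hold. -/
def IsYangSolution (I : Set ℝ)
    (u u' u'' : ℝ → EuclideanSpace ℝ (Fin 4))
    (r r' r'' : ℝ → ℝ)
    (e e' : ℝ → EuclideanSpace ℝ (Fin 3)) : Prop :=
  (∀ t ∈ I, HasDerivAt u (u' t) t) ∧ (∀ t ∈ I, HasDerivAt u' (u'' t) t) ∧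
  ContinuousOn u'' I ∧
  (∀ t ∈ I, HasDerivAt r (r' t) t) ∧ (∀ t ∈ I, HasDerivAt r' (r'' t) t) ∧
  ContinuousOn r'' I ∧
  (∀ t ∈ I, HasDerivAt e (e' t) t) ∧ ContinuousOn e' I ∧
  (∀ t ∈ I, 0 < r t) ∧
  (∀ t ∈ I,
    u'' t + (2 * ‖u' t‖ ^ 2 / (‖u t‖ ^ 2 + 1)) • u t
        - (4 * ⟪u t, u' t⟫_ℝ / (‖u t‖ ^ 2 + 1)) • u' t
        + (2 * r' t / r t) • u' t
      = (1 / (2 * r t ^ 2)) • Eop (e t) (u' t)) ∧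
  (∀ t ∈ I, r'' t = 4 * r t * ‖u' t‖ ^ 2 / (‖u t‖ ^ 2 + 1) ^ 2) ∧
  (∀ t ∈ I, e' t = (-2 : ℝ) • Bop (Aop (u t) (u' t)) (e t))

/-- The associated position curve in `ℝ⁵ = ℝ⁴ × ℝ`:
`x = (2 r u/(|u|²+1), r (|u|²−1)/(|u|²+1))`. -/
def yangX (u : EuclideanSpace ℝ (Fin 4)) (r : ℝ) : EuclideanSpace ℝ (Fin 5) :=
  (WithLp.equiv 2 (Fin 5 → ℝ)).symm
    ![2 * r * u 0 / (‖u‖ ^ 2 + 1),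
      2 * r * u 1 / (‖u‖ ^ 2 + 1),
      2 * r * u 2 / (‖u‖ ^ 2 + 1),
      2 * r * u 3 / (‖u‖ ^ 2 + 1),
      r * (‖u‖ ^ 2 - 1) / (‖u‖ ^ 2 + 1)]

/-- The associated vector `L ∈ ℝ⁵ = ℝ⁴ × ℝ`:
`L = ( ((|e|² − 4r²⟨A u̇, e⟩) u + 2r² E u̇)/(2(|u|²+1)),
       2r²⟨A u̇, e⟩/(|u|²+1) + (|e|²/4)(|u|²−1)/(|u|²+1) )`. -/
def yangL (u u' : EuclideanSpace ℝ (Fin 4)) (r : ℝ) (e : EuclideanSpace ℝ (Fin 3)) :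
    EuclideanSpace ℝ (Fin 5) :=
  (WithLp.equiv 2 (Fin 5 → ℝ)).symm
    ![((‖e‖ ^ 2 - 4 * r ^ 2 * ⟪Aop u u', e⟫_ℝ) * u 0 + 2 * r ^ 2 * Eop e u' 0)
        / (2 * (‖u‖ ^ 2 + 1)),
      ((‖e‖ ^ 2 - 4 * r ^ 2 * ⟪Aop u u', e⟫_ℝ) * u 1 + 2 * r ^ 2 * Eop e u' 1)
        / (2 * (‖u‖ ^ 2 + 1)),
      ((‖e‖ ^ 2 - 4 * r ^ 2 * ⟪Aop u u', e⟫_ℝ) * u 2 + 2 * r ^ 2 * Eop e u' 2)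
        / (2 * (‖u‖ ^ 2 + 1)),
      ((‖e‖ ^ 2 - 4 * r ^ 2 * ⟪Aop u u', e⟫_ℝ) * u 3 + 2 * r ^ 2 * Eop e u' 3)
        / (2 * (‖u‖ ^ 2 + 1)),
      2 * r ^ 2 * ⟪Aop u u', e⟫_ℝ / (‖u‖ ^ 2 + 1)
        + (‖e‖ ^ 2 / 4) * (‖u‖ ^ 2 - 1) / (‖u‖ ^ 2 + 1)]


set_option maxHeartbeats 2000000 in
private lemma yangAux_comp0 (a0 a1 a2 a3 b0 b1 b2 b3 R n E0 E1 E2 : ℝ → ℝ) (t : ℝ)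
    (c0 c1 c2 c3 rp ep0 ep1 ep2 dn : ℝ)
    (ha0 : HasDerivAt a0 (b0 t) t) (ha1 : HasDerivAt a1 (b1 t) t)
    (ha2 : HasDerivAt a2 (b2 t) t) (ha3 : HasDerivAt a3 (b3 t) t)
    (hb0 : HasDerivAt b0 c0 t) (hb1 : HasDerivAt b1 c1 t)
    (hb2 : HasDerivAt b2 c2 t) (hb3 : HasDerivAt b3 c3 t)
    (hR : HasDerivAt R rp t) (hn : HasDerivAt n dn t)
    (hE0 : HasDerivAt E0 ep0 t) (hE1 : HasDerivAt E1 ep1 t) (hE2 : HasDerivAt E2 ep2 t)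
    (hRne : R t ≠ 0) (hQne : n t + 1 ≠ 0)
    (hdn : dn = 2*(a0 t*b0 t + a1 t*b1 t + a2 t*b2 t + a3 t*b3 t))
    (hc0 : c0 = -(2*(b0 t^2+b1 t^2+b2 t^2+b3 t^2)/(n t+1))*a0 t
        + (4*(a0 t*b0 t+a1 t*b1 t+a2 t*b2 t+a3 t*b3 t)/(n t+1))*b0 t
        - (2*rp/R t)*b0 t + (1/(2*R t^2))*(E0 t*b1 t + E1 t*b2 t + E2 t*b3 t))
    (hc1 : c1 = -(2*(b0 t^2+b1 t^2+b2 t^2+b3 t^2)/(n t+1))*a1 t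
        + (4*(a0 t*b0 t+a1 t*b1 t+a2 t*b2 t+a3 t*b3 t)/(n t+1))*b1 t
        - (2*rp/R t)*b1 t + (1/(2*R t^2))*(-(E0 t)*b0 t - E2 t*b2 t + E1 t*b3 t))
    (hc2 : c2 = -(2*(b0 t^2+b1 t^2+b2 t^2+b3 t^2)/(n t+1))*a2 t
        + (4*(a0 t*b0 t+a1 t*b1 t+a2 t*b2 t+a3 t*b3 t)/(n t+1))*b2 t
        - (2*rp/R t)*b2 t + (1/(2*R t^2))*(-(E1 t)*b0 t + E2 t*b1 t - E0 t*b3 t))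
    (hc3 : c3 = -(2*(b0 t^2+b1 t^2+b2 t^2+b3 t^2)/(n t+1))*a3 t
        + (4*(a0 t*b0 t+a1 t*b1 t+a2 t*b2 t+a3 t*b3 t)/(n t+1))*b3 t
        - (2*rp/R t)*b3 t + (1/(2*R t^2))*(-(E2 t)*b0 t - E1 t*b1 t + E0 t*b2 t))
    (hep0 : ep0 = -2*(-((-(a3 t)*b0 t + a2 t*b1 t - a1 t*b2 t + a0 t*b3 t)/(n t+1))*E1 t
        + ((-(a2 t)*b0 t - a3 t*b1 t + a0 t*b2 t + a1 t*b3 t)/(n t+1))*E2 t))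
    (hep1 : ep1 = -2*(((-(a3 t)*b0 t + a2 t*b1 t - a1 t*b2 t + a0 t*b3 t)/(n t+1))*E0 t
        - ((-(a1 t)*b0 t + a0 t*b1 t + a3 t*b2 t - a2 t*b3 t)/(n t+1))*E2 t))
    (hep2 : ep2 = -2*(-((-(a2 t)*b0 t - a3 t*b1 t + a0 t*b2 t + a1 t*b3 t)/(n t+1))*E0 t
        + ((-(a1 t)*b0 t + a0 t*b1 t + a3 t*b2 t - a2 t*b3 t)/(n t+1))*E1 t)) :
    HasDerivAt (fun s =>
      ((E0 s^2 + E1 s^2 + E2 s^2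
          - 4 * R s^2 * ((E0 s * (-(a1 s)*b0 s + a0 s*b1 s + a3 s*b2 s - a2 s*b3 s)
              + E1 s * (-(a2 s)*b0 s - a3 s*b1 s + a0 s*b2 s + a1 s*b3 s)
              + E2 s * (-(a3 s)*b0 s + a2 s*b1 s - a1 s*b2 s + a0 s*b3 s)) / (n s + 1)))
          * a0 s
        + 2 * R s^2 * (E0 s * b1 s + E1 s * b2 s + E2 s * b3 s)) / (2 * (n s + 1))) 0 t := by
  have hP := ((hE0.mul ((((ha1.neg.mul hb0).add (ha0.mul hb1)).add (ha3.mul hb2)).sub (ha2.mul hb3))).add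
      (hE1.mul ((((ha2.neg.mul hb0).sub (ha3.mul hb1)).add (ha0.mul hb2)).add (ha1.mul hb3)))).add
      (hE2.mul ((((ha3.neg.mul hb0).add (ha2.mul hb1)).sub (ha1.mul hb2)).add (ha0.mul hb3)))
  have hbeta := hP.div (hn.add_const 1) hQne
  have hnum := ((((hE0.pow 2).add (hE1.pow 2)).add (hE2.pow 2)).sub
      (((hR.pow 2).const_mul 4).mul hbeta)).mul ha0 |>.add
      (((hR.pow 2).const_mul 2).mul (((hE0.mul hb1).add (hE1.mul hb2)).add (hE2.mul hb3)))
  have H := hnum.div ((hn.add_const 1).const_mul 2) (by simpa using hQne)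
  refine H.congr_deriv ?_
  rw [hc0, hc1, hc2, hc3, hep0, hep1, hep2, hdn]
  simp only [Pi.add_apply, Pi.sub_apply, Pi.mul_apply, Pi.neg_apply, Pi.div_apply, Pi.pow_apply]
  field_simp
  ring

set_option maxHeartbeats 2000000 in
private lemma yangAux_comp1 (a0 a1 a2 a3 b0 b1 b2 b3 R n E0 E1 E2 : ℝ → ℝ) (t : ℝ)
    (c0 c1 c2 c3 rp ep0 ep1 ep2 dn : ℝ)
    (ha0 : HasDerivAt a0 (b0 t) t) (ha1 : HasDerivAt a1 (b1 t) t)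
    (ha2 : HasDerivAt a2 (b2 t) t) (ha3 : HasDerivAt a3 (b3 t) t)
    (hb0 : HasDerivAt b0 c0 t) (hb1 : HasDerivAt b1 c1 t)
    (hb2 : HasDerivAt b2 c2 t) (hb3 : HasDerivAt b3 c3 t)
    (hR : HasDerivAt R rp t) (hn : HasDerivAt n dn t)
    (hE0 : HasDerivAt E0 ep0 t) (hE1 : HasDerivAt E1 ep1 t) (hE2 : HasDerivAt E2 ep2 t)
    (hRne : R t ≠ 0) (hQne : n t + 1 ≠ 0)
    (hdn : dn = 2*(a0 t*b0 t + a1 t*b1 t + a2 t*b2 t + a3 t*b3 t))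
    (hc0 : c0 = -(2*(b0 t^2+b1 t^2+b2 t^2+b3 t^2)/(n t+1))*a0 t
        + (4*(a0 t*b0 t+a1 t*b1 t+a2 t*b2 t+a3 t*b3 t)/(n t+1))*b0 t
        - (2*rp/R t)*b0 t + (1/(2*R t^2))*(E0 t*b1 t + E1 t*b2 t + E2 t*b3 t))
    (hc1 : c1 = -(2*(b0 t^2+b1 t^2+b2 t^2+b3 t^2)/(n t+1))*a1 t
        + (4*(a0 t*b0 t+a1 t*b1 t+a2 t*b2 t+a3 t*b3 t)/(n t+1))*b1 t
        - (2*rp/R t)*b1 t + (1/(2*R t^2))*(-(E0 t)*b0 t - E2 t*b2 t + E1 t*b3 t))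
    (hc2 : c2 = -(2*(b0 t^2+b1 t^2+b2 t^2+b3 t^2)/(n t+1))*a2 t
        + (4*(a0 t*b0 t+a1 t*b1 t+a2 t*b2 t+a3 t*b3 t)/(n t+1))*b2 t
        - (2*rp/R t)*b2 t + (1/(2*R t^2))*(-(E1 t)*b0 t + E2 t*b1 t - E0 t*b3 t))
    (hc3 : c3 = -(2*(b0 t^2+b1 t^2+b2 t^2+b3 t^2)/(n t+1))*a3 t
        + (4*(a0 t*b0 t+a1 t*b1 t+a2 t*b2 t+a3 t*b3 t)/(n t+1))*b3 t
        - (2*rp/R t)*b3 t + (1/(2*R t^2))*(-(E2 t)*b0 t - E1 t*b1 t + E0 t*b2 t))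
    (hep0 : ep0 = -2*(-((-(a3 t)*b0 t + a2 t*b1 t - a1 t*b2 t + a0 t*b3 t)/(n t+1))*E1 t
        + ((-(a2 t)*b0 t - a3 t*b1 t + a0 t*b2 t + a1 t*b3 t)/(n t+1))*E2 t))
    (hep1 : ep1 = -2*(((-(a3 t)*b0 t + a2 t*b1 t - a1 t*b2 t + a0 t*b3 t)/(n t+1))*E0 t
        - ((-(a1 t)*b0 t + a0 t*b1 t + a3 t*b2 t - a2 t*b3 t)/(n t+1))*E2 t))
    (hep2 : ep2 = -2*(-((-(a2 t)*b0 t - a3 t*b1 t + a0 t*b2 t + a1 t*b3 t)/(n t+1))*E0 t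
        + ((-(a1 t)*b0 t + a0 t*b1 t + a3 t*b2 t - a2 t*b3 t)/(n t+1))*E1 t)) :
    HasDerivAt (fun s =>
      ((E0 s^2 + E1 s^2 + E2 s^2
          - 4 * R s^2 * ((E0 s * (-(a1 s)*b0 s + a0 s*b1 s + a3 s*b2 s - a2 s*b3 s)
              + E1 s * (-(a2 s)*b0 s - a3 s*b1 s + a0 s*b2 s + a1 s*b3 s)
              + E2 s * (-(a3 s)*b0 s + a2 s*b1 s - a1 s*b2 s + a0 s*b3 s)) / (n s + 1)))
          * a1 s
        + 2 * R s^2 * (-(E0 s)*b0 s - E2 s*b2 s + E1 s*b3 s)) / (2 * (n s + 1))) 0 t := by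
  have hP := ((hE0.mul ((((ha1.neg.mul hb0).add (ha0.mul hb1)).add (ha3.mul hb2)).sub (ha2.mul hb3))).add
      (hE1.mul ((((ha2.neg.mul hb0).sub (ha3.mul hb1)).add (ha0.mul hb2)).add (ha1.mul hb3)))).add
      (hE2.mul ((((ha3.neg.mul hb0).add (ha2.mul hb1)).sub (ha1.mul hb2)).add (ha0.mul hb3)))
  have hbeta := hP.div (hn.add_const 1) hQne
  have hnum := ((((hE0.pow 2).add (hE1.pow 2)).add (hE2.pow 2)).sub
      (((hR.pow 2).const_mul 4).mul hbeta)).mul ha1 |>.add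
      (((hR.pow 2).const_mul 2).mul (((hE0.neg.mul hb0).sub (hE2.mul hb2)).add (hE1.mul hb3)))
  have H := hnum.div ((hn.add_const 1).const_mul 2) (by simpa using hQne)
  refine H.congr_deriv ?_
  rw [hc0, hc1, hc2, hc3, hep0, hep1, hep2, hdn]
  simp only [Pi.add_apply, Pi.sub_apply, Pi.mul_apply, Pi.neg_apply, Pi.div_apply, Pi.pow_apply]
  field_simp
  ring

set_option maxHeartbeats 2000000 in
private lemma yangAux_comp2 (a0 a1 a2 a3 b0 b1 b2 b3 R n E0 E1 E2 : ℝ → ℝ) (t : ℝ)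
    (c0 c1 c2 c3 rp ep0 ep1 ep2 dn : ℝ)
    (ha0 : HasDerivAt a0 (b0 t) t) (ha1 : HasDerivAt a1 (b1 t) t)
    (ha2 : HasDerivAt a2 (b2 t) t) (ha3 : HasDerivAt a3 (b3 t) t)
    (hb0 : HasDerivAt b0 c0 t) (hb1 : HasDerivAt b1 c1 t)
    (hb2 : HasDerivAt b2 c2 t) (hb3 : HasDerivAt b3 c3 t)
    (hR : HasDerivAt R rp t) (hn : HasDerivAt n dn t)
    (hE0 : HasDerivAt E0 ep0 t) (hE1 : HasDerivAt E1 ep1 t) (hE2 : HasDerivAt E2 ep2 t)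
    (hRne : R t ≠ 0) (hQne : n t + 1 ≠ 0)
    (hdn : dn = 2*(a0 t*b0 t + a1 t*b1 t + a2 t*b2 t + a3 t*b3 t))
    (hc0 : c0 = -(2*(b0 t^2+b1 t^2+b2 t^2+b3 t^2)/(n t+1))*a0 t
        + (4*(a0 t*b0 t+a1 t*b1 t+a2 t*b2 t+a3 t*b3 t)/(n t+1))*b0 t
        - (2*rp/R t)*b0 t + (1/(2*R t^2))*(E0 t*b1 t + E1 t*b2 t + E2 t*b3 t))
    (hc1 : c1 = -(2*(b0 t^2+b1 t^2+b2 t^2+b3 t^2)/(n t+1))*a1 t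
        + (4*(a0 t*b0 t+a1 t*b1 t+a2 t*b2 t+a3 t*b3 t)/(n t+1))*b1 t
        - (2*rp/R t)*b1 t + (1/(2*R t^2))*(-(E0 t)*b0 t - E2 t*b2 t + E1 t*b3 t))
    (hc2 : c2 = -(2*(b0 t^2+b1 t^2+b2 t^2+b3 t^2)/(n t+1))*a2 t
        + (4*(a0 t*b0 t+a1 t*b1 t+a2 t*b2 t+a3 t*b3 t)/(n t+1))*b2 t
        - (2*rp/R t)*b2 t + (1/(2*R t^2))*(-(E1 t)*b0 t + E2 t*b1 t - E0 t*b3 t))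
    (hc3 : c3 = -(2*(b0 t^2+b1 t^2+b2 t^2+b3 t^2)/(n t+1))*a3 t
        + (4*(a0 t*b0 t+a1 t*b1 t+a2 t*b2 t+a3 t*b3 t)/(n t+1))*b3 t
        - (2*rp/R t)*b3 t + (1/(2*R t^2))*(-(E2 t)*b0 t - E1 t*b1 t + E0 t*b2 t))
    (hep0 : ep0 = -2*(-((-(a3 t)*b0 t + a2 t*b1 t - a1 t*b2 t + a0 t*b3 t)/(n t+1))*E1 t
        + ((-(a2 t)*b0 t - a3 t*b1 t + a0 t*b2 t + a1 t*b3 t)/(n t+1))*E2 t))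
    (hep1 : ep1 = -2*(((-(a3 t)*b0 t + a2 t*b1 t - a1 t*b2 t + a0 t*b3 t)/(n t+1))*E0 t
        - ((-(a1 t)*b0 t + a0 t*b1 t + a3 t*b2 t - a2 t*b3 t)/(n t+1))*E2 t))
    (hep2 : ep2 = -2*(-((-(a2 t)*b0 t - a3 t*b1 t + a0 t*b2 t + a1 t*b3 t)/(n t+1))*E0 t
        + ((-(a1 t)*b0 t + a0 t*b1 t + a3 t*b2 t - a2 t*b3 t)/(n t+1))*E1 t)) :
    HasDerivAt (fun s =>
      ((E0 s^2 + E1 s^2 + E2 s^2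
          - 4 * R s^2 * ((E0 s * (-(a1 s)*b0 s + a0 s*b1 s + a3 s*b2 s - a2 s*b3 s)
              + E1 s * (-(a2 s)*b0 s - a3 s*b1 s + a0 s*b2 s + a1 s*b3 s)
              + E2 s * (-(a3 s)*b0 s + a2 s*b1 s - a1 s*b2 s + a0 s*b3 s)) / (n s + 1)))
          * a2 s
        + 2 * R s^2 * (-(E1 s)*b0 s + E2 s*b1 s - E0 s*b3 s)) / (2 * (n s + 1))) 0 t := by
  have hP := ((hE0.mul ((((ha1.neg.mul hb0).add (ha0.mul hb1)).add (ha3.mul hb2)).sub (ha2.mul hb3))).add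
      (hE1.mul ((((ha2.neg.mul hb0).sub (ha3.mul hb1)).add (ha0.mul hb2)).add (ha1.mul hb3)))).add
      (hE2.mul ((((ha3.neg.mul hb0).add (ha2.mul hb1)).sub (ha1.mul hb2)).add (ha0.mul hb3)))
  have hbeta := hP.div (hn.add_const 1) hQne
  have hnum := ((((hE0.pow 2).add (hE1.pow 2)).add (hE2.pow 2)).sub
      (((hR.pow 2).const_mul 4).mul hbeta)).mul ha2 |>.add
      (((hR.pow 2).const_mul 2).mul (((hE1.neg.mul hb0).add (hE2.mul hb1)).sub (hE0.mul hb3)))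
  have H := hnum.div ((hn.add_const 1).const_mul 2) (by simpa using hQne)
  refine H.congr_deriv ?_
  rw [hc0, hc1, hc2, hc3, hep0, hep1, hep2, hdn]
  simp only [Pi.add_apply, Pi.sub_apply, Pi.mul_apply, Pi.neg_apply, Pi.div_apply, Pi.pow_apply]
  field_simp
  ring

set_option maxHeartbeats 2000000 in
private lemma yangAux_comp3 (a0 a1 a2 a3 b0 b1 b2 b3 R n E0 E1 E2 : ℝ → ℝ) (t : ℝ)
    (c0 c1 c2 c3 rp ep0 ep1 ep2 dn : ℝ)
    (ha0 : HasDerivAt a0 (b0 t) t) (ha1 : HasDerivAt a1 (b1 t) t)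
    (ha2 : HasDerivAt a2 (b2 t) t) (ha3 : HasDerivAt a3 (b3 t) t)
    (hb0 : HasDerivAt b0 c0 t) (hb1 : HasDerivAt b1 c1 t)
    (hb2 : HasDerivAt b2 c2 t) (hb3 : HasDerivAt b3 c3 t)
    (hR : HasDerivAt R rp t) (hn : HasDerivAt n dn t)
    (hE0 : HasDerivAt E0 ep0 t) (hE1 : HasDerivAt E1 ep1 t) (hE2 : HasDerivAt E2 ep2 t)
    (hRne : R t ≠ 0) (hQne : n t + 1 ≠ 0)
    (hdn : dn = 2*(a0 t*b0 t + a1 t*b1 t + a2 t*b2 t + a3 t*b3 t))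
    (hc0 : c0 = -(2*(b0 t^2+b1 t^2+b2 t^2+b3 t^2)/(n t+1))*a0 t
        + (4*(a0 t*b0 t+a1 t*b1 t+a2 t*b2 t+a3 t*b3 t)/(n t+1))*b0 t
        - (2*rp/R t)*b0 t + (1/(2*R t^2))*(E0 t*b1 t + E1 t*b2 t + E2 t*b3 t))
    (hc1 : c1 = -(2*(b0 t^2+b1 t^2+b2 t^2+b3 t^2)/(n t+1))*a1 t
        + (4*(a0 t*b0 t+a1 t*b1 t+a2 t*b2 t+a3 t*b3 t)/(n t+1))*b1 t
        - (2*rp/R t)*b1 t + (1/(2*R t^2))*(-(E0 t)*b0 t - E2 t*b2 t + E1 t*b3 t))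
    (hc2 : c2 = -(2*(b0 t^2+b1 t^2+b2 t^2+b3 t^2)/(n t+1))*a2 t
        + (4*(a0 t*b0 t+a1 t*b1 t+a2 t*b2 t+a3 t*b3 t)/(n t+1))*b2 t
        - (2*rp/R t)*b2 t + (1/(2*R t^2))*(-(E1 t)*b0 t + E2 t*b1 t - E0 t*b3 t))
    (hc3 : c3 = -(2*(b0 t^2+b1 t^2+b2 t^2+b3 t^2)/(n t+1))*a3 t
        + (4*(a0 t*b0 t+a1 t*b1 t+a2 t*b2 t+a3 t*b3 t)/(n t+1))*b3 t
        - (2*rp/R t)*b3 t + (1/(2*R t^2))*(-(E2 t)*b0 t - E1 t*b1 t + E0 t*b2 t))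
    (hep0 : ep0 = -2*(-((-(a3 t)*b0 t + a2 t*b1 t - a1 t*b2 t + a0 t*b3 t)/(n t+1))*E1 t
        + ((-(a2 t)*b0 t - a3 t*b1 t + a0 t*b2 t + a1 t*b3 t)/(n t+1))*E2 t))
    (hep1 : ep1 = -2*(((-(a3 t)*b0 t + a2 t*b1 t - a1 t*b2 t + a0 t*b3 t)/(n t+1))*E0 t
        - ((-(a1 t)*b0 t + a0 t*b1 t + a3 t*b2 t - a2 t*b3 t)/(n t+1))*E2 t))
    (hep2 : ep2 = -2*(-((-(a2 t)*b0 t - a3 t*b1 t + a0 t*b2 t + a1 t*b3 t)/(n t+1))*E0 t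
        + ((-(a1 t)*b0 t + a0 t*b1 t + a3 t*b2 t - a2 t*b3 t)/(n t+1))*E1 t)) :
    HasDerivAt (fun s =>
      ((E0 s^2 + E1 s^2 + E2 s^2
          - 4 * R s^2 * ((E0 s * (-(a1 s)*b0 s + a0 s*b1 s + a3 s*b2 s - a2 s*b3 s)
              + E1 s * (-(a2 s)*b0 s - a3 s*b1 s + a0 s*b2 s + a1 s*b3 s)
              + E2 s * (-(a3 s)*b0 s + a2 s*b1 s - a1 s*b2 s + a0 s*b3 s)) / (n s + 1)))
          * a3 s
        + 2 * R s^2 * (-(E2 s)*b0 s - E1 s*b1 s + E0 s*b2 s)) / (2 * (n s + 1))) 0 t := by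
  have hP := ((hE0.mul ((((ha1.neg.mul hb0).add (ha0.mul hb1)).add (ha3.mul hb2)).sub (ha2.mul hb3))).add
      (hE1.mul ((((ha2.neg.mul hb0).sub (ha3.mul hb1)).add (ha0.mul hb2)).add (ha1.mul hb3)))).add
      (hE2.mul ((((ha3.neg.mul hb0).add (ha2.mul hb1)).sub (ha1.mul hb2)).add (ha0.mul hb3)))
  have hbeta := hP.div (hn.add_const 1) hQne
  have hnum := ((((hE0.pow 2).add (hE1.pow 2)).add (hE2.pow 2)).sub
      (((hR.pow 2).const_mul 4).mul hbeta)).mul ha3 |>.add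
      (((hR.pow 2).const_mul 2).mul (((hE2.neg.mul hb0).sub (hE1.mul hb1)).add (hE0.mul hb2)))
  have H := hnum.div ((hn.add_const 1).const_mul 2) (by simpa using hQne)
  refine H.congr_deriv ?_
  rw [hc0, hc1, hc2, hc3, hep0, hep1, hep2, hdn]
  simp only [Pi.add_apply, Pi.sub_apply, Pi.mul_apply, Pi.neg_apply, Pi.div_apply, Pi.pow_apply]
  field_simp
  ring

set_option maxHeartbeats 2000000 in
private lemma yangAux_comp4 (a0 a1 a2 a3 b0 b1 b2 b3 R n E0 E1 E2 : ℝ → ℝ) (t : ℝ)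
    (c0 c1 c2 c3 rp ep0 ep1 ep2 dn : ℝ)
    (ha0 : HasDerivAt a0 (b0 t) t) (ha1 : HasDerivAt a1 (b1 t) t)
    (ha2 : HasDerivAt a2 (b2 t) t) (ha3 : HasDerivAt a3 (b3 t) t)
    (hb0 : HasDerivAt b0 c0 t) (hb1 : HasDerivAt b1 c1 t)
    (hb2 : HasDerivAt b2 c2 t) (hb3 : HasDerivAt b3 c3 t)
    (hR : HasDerivAt R rp t) (hn : HasDerivAt n dn t)
    (hE0 : HasDerivAt E0 ep0 t) (hE1 : HasDerivAt E1 ep1 t) (hE2 : HasDerivAt E2 ep2 t)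
    (hRne : R t ≠ 0) (hQne : n t + 1 ≠ 0)
    (hdn : dn = 2*(a0 t*b0 t + a1 t*b1 t + a2 t*b2 t + a3 t*b3 t))
    (hc0 : c0 = -(2*(b0 t^2+b1 t^2+b2 t^2+b3 t^2)/(n t+1))*a0 t
        + (4*(a0 t*b0 t+a1 t*b1 t+a2 t*b2 t+a3 t*b3 t)/(n t+1))*b0 t
        - (2*rp/R t)*b0 t + (1/(2*R t^2))*(E0 t*b1 t + E1 t*b2 t + E2 t*b3 t))
    (hc1 : c1 = -(2*(b0 t^2+b1 t^2+b2 t^2+b3 t^2)/(n t+1))*a1 t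
        + (4*(a0 t*b0 t+a1 t*b1 t+a2 t*b2 t+a3 t*b3 t)/(n t+1))*b1 t
        - (2*rp/R t)*b1 t + (1/(2*R t^2))*(-(E0 t)*b0 t - E2 t*b2 t + E1 t*b3 t))
    (hc2 : c2 = -(2*(b0 t^2+b1 t^2+b2 t^2+b3 t^2)/(n t+1))*a2 t
        + (4*(a0 t*b0 t+a1 t*b1 t+a2 t*b2 t+a3 t*b3 t)/(n t+1))*b2 t
        - (2*rp/R t)*b2 t + (1/(2*R t^2))*(-(E1 t)*b0 t + E2 t*b1 t - E0 t*b3 t))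
    (hc3 : c3 = -(2*(b0 t^2+b1 t^2+b2 t^2+b3 t^2)/(n t+1))*a3 t
        + (4*(a0 t*b0 t+a1 t*b1 t+a2 t*b2 t+a3 t*b3 t)/(n t+1))*b3 t
        - (2*rp/R t)*b3 t + (1/(2*R t^2))*(-(E2 t)*b0 t - E1 t*b1 t + E0 t*b2 t))
    (hep0 : ep0 = -2*(-((-(a3 t)*b0 t + a2 t*b1 t - a1 t*b2 t + a0 t*b3 t)/(n t+1))*E1 t
        + ((-(a2 t)*b0 t - a3 t*b1 t + a0 t*b2 t + a1 t*b3 t)/(n t+1))*E2 t))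
    (hep1 : ep1 = -2*(((-(a3 t)*b0 t + a2 t*b1 t - a1 t*b2 t + a0 t*b3 t)/(n t+1))*E0 t
        - ((-(a1 t)*b0 t + a0 t*b1 t + a3 t*b2 t - a2 t*b3 t)/(n t+1))*E2 t))
    (hep2 : ep2 = -2*(-((-(a2 t)*b0 t - a3 t*b1 t + a0 t*b2 t + a1 t*b3 t)/(n t+1))*E0 t
        + ((-(a1 t)*b0 t + a0 t*b1 t + a3 t*b2 t - a2 t*b3 t)/(n t+1))*E1 t)) :
    HasDerivAt (fun s =>
      2 * R s^2 * ((E0 s * (-(a1 s)*b0 s + a0 s*b1 s + a3 s*b2 s - a2 s*b3 s)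
              + E1 s * (-(a2 s)*b0 s - a3 s*b1 s + a0 s*b2 s + a1 s*b3 s)
              + E2 s * (-(a3 s)*b0 s + a2 s*b1 s - a1 s*b2 s + a0 s*b3 s)) / (n s + 1)) / (n s + 1)
        + (E0 s^2 + E1 s^2 + E2 s^2)/4 * (n s - 1) / (n s + 1)) 0 t := by
  have hP := ((hE0.mul ((((ha1.neg.mul hb0).add (ha0.mul hb1)).add (ha3.mul hb2)).sub (ha2.mul hb3))).add
      (hE1.mul ((((ha2.neg.mul hb0).sub (ha3.mul hb1)).add (ha0.mul hb2)).add (ha1.mul hb3)))).add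
      (hE2.mul ((((ha3.neg.mul hb0).add (ha2.mul hb1)).sub (ha1.mul hb2)).add (ha0.mul hb3)))
  have hbeta := hP.div (hn.add_const 1) hQne
  have h1 := ((((hR.pow 2).const_mul 2).mul hbeta).div (hn.add_const 1) hQne)
  have h2 := ((((((hE0.pow 2).add (hE1.pow 2)).add (hE2.pow 2)).div_const 4).mul (hn.sub_const 1)).div (hn.add_const 1) hQne)
  have H := h1.add h2
  refine H.congr_deriv ?_
  rw [hc0, hc1, hc2, hc3, hep0, hep1, hep2, hdn]
  simp only [Pi.add_apply, Pi.sub_apply, Pi.mul_apply, Pi.neg_apply, Pi.div_apply, Pi.pow_apply]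
  field_simp
  ring


private lemma yangAux_normsq4 (v : EuclideanSpace ℝ (Fin 4)) :
    ‖v‖^2 = v 0^2 + v 1^2 + v 2^2 + v 3^2 := by
  rw [← real_inner_self_eq_norm_sq]
  simp only [PiLp.inner_apply, RCLike.inner_apply, Fin.sum_univ_four, sq, conj_trivial]

private lemma yangAux_normsq3 (v : EuclideanSpace ℝ (Fin 3)) :
    ‖v‖^2 = v 0^2 + v 1^2 + v 2^2 := by
  rw [← real_inner_self_eq_norm_sq]
  simp only [PiLp.inner_apply, RCLike.inner_apply, Fin.sum_univ_three, sq, conj_trivial]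

private lemma yangAux_normsq5 (v : EuclideanSpace ℝ (Fin 5)) :
    ‖v‖^2 = v 0^2 + v 1^2 + v 2^2 + v 3^2 + v 4^2 := by
  rw [← real_inner_self_eq_norm_sq]
  simp only [PiLp.inner_apply, RCLike.inner_apply, Fin.sum_univ_five, sq, conj_trivial]

private lemma yangAux_inner3 (v w : EuclideanSpace ℝ (Fin 3)) :
    ⟪v, w⟫_ℝ = v 0 * w 0 + v 1 * w 1 + v 2 * w 2 := by
  simp [PiLp.inner_apply, RCLike.inner_apply, Fin.sum_univ_three]
  ring

private lemma yangAux_inner4 (v w : EuclideanSpace ℝ (Fin 4)) :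
    ⟪v, w⟫_ℝ = v 0 * w 0 + v 1 * w 1 + v 2 * w 2 + v 3 * w 3 := by
  simp [PiLp.inner_apply, RCLike.inner_apply, Fin.sum_univ_four]
  ring

private lemma yangAux_inner5 (v w : EuclideanSpace ℝ (Fin 5)) :
    ⟪v, w⟫_ℝ = v 0 * w 0 + v 1 * w 1 + v 2 * w 2 + v 3 * w 3 + v 4 * w 4 := by
  simp [PiLp.inner_apply, RCLike.inner_apply, Fin.sum_univ_five]
  ring

private lemma yangAux_const {I : Set ℝ} (hIopen : IsOpen I) (hconv : Convex ℝ I) {f : ℝ → ℝ}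
    (h : ∀ t ∈ I, HasDerivAt f 0 t) {s t : ℝ} (hs : s ∈ I) (ht : t ∈ I) : f s = f t := by
  apply hconv.is_const_of_fderivWithin_eq_zero
    (fun y hy => ((h y hy).differentiableAt).differentiableWithinAt)
    (fun y hy => ?_) hs ht
  rw [fderivWithin_of_isOpen hIopen hy, (h y hy).hasFDerivAt.fderiv]
  ext z
  simp


set_option maxHeartbeats 4000000

/-- For a solution `(u, r, e)` of the Yang monopole equations of motion
on an open interval `I`, with position curve `x` and vector `L`, one has
`⟨x(t), L(t)⟩ = (|e(t)|²/4)·|x(t)|` for all `t ∈ I`; in particular, when `L` is nowhere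
zero on `I`, the cosine of the angle between `x(t)` and `L`, namely
`⟨x(t), L(t)⟩/(|x(t)||L(t)|) = |e|²/(4|L|)`, is constant on `I`, so `x(I)` lies on a cone
with vertex at the origin directed along `L`. -/
theorem yang_inner_x_L
    (I : Set ℝ) (hIopen : IsOpen I) (hIconn : I.OrdConnected)
    (u u' u'' : ℝ → EuclideanSpace ℝ (Fin 4))
    (r r' r'' : ℝ → ℝ)
    (e e' : ℝ → EuclideanSpace ℝ (Fin 3))
    (hsol : IsYangSolution I u u' u'' r r' r'' e e')
    (x L : ℝ → EuclideanSpace ℝ (Fin 5))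
    (hx : ∀ t, x t = yangX (u t) (r t))
    (hL : ∀ t, L t = yangL (u t) (u' t) (r t) (e t)) :
    (∀ t ∈ I, ⟪x t, L t⟫_ℝ = (‖e t‖ ^ 2 / 4) * ‖x t‖) ∧
      ((∀ t ∈ I, L t ≠ 0) →
        ∀ s ∈ I, ∀ t ∈ I,
          ⟪x s, L s⟫_ℝ / (‖x s‖ * ‖L s‖) = ⟪x t, L t⟫_ℝ / (‖x t‖ * ‖L t‖) ∧
          ⟪x t, L t⟫_ℝ / (‖x t‖ * ‖L t‖) = ‖e t‖ ^ 2 / (4 * ‖L t‖)) := by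
  obtain ⟨hu, hu', hu''c, hr, hr', hr''c, he, he'c, hrpos, heq1, heq2, heq3⟩ := hsol
  have hconv : Convex ℝ I := hIconn.convex
  have hQpos : ∀ s : ℝ, (0:ℝ) < ‖u s‖^2 + 1 := fun s => by positivity
  have hQne : ∀ s : ℝ, (‖u s‖^2 + 1 : ℝ) ≠ 0 := fun s => (hQpos s).ne'
  have norm_sq4 := yangAux_normsq4
  have norm_sq3 := yangAux_normsq3
  have inner3 := yangAux_inner3
  have inner4 := yangAux_inner4
  -- the norm of the position curve is r
  have hxnorm : ∀ t ∈ I, ‖x t‖ = r t := by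
    intro t ht
    have h2 : ‖x t‖^2 = r t^2 := by
      rw [hx, yangAux_normsq5]
      simp only [yangX, WithLp.equiv_symm_apply, PiLp.toLp_apply, Matrix.cons_val_zero, Matrix.cons_val_one,
        Matrix.head_cons, Matrix.cons_val_two, Matrix.tail_cons, Matrix.cons_val_three,
        Matrix.cons_val_four]
      rw [norm_sq4 (u t)]
      field_simp
      ring
    have habs : ‖x t‖ = |r t| := by
      have := abs_nonneg (r t)
      nlinarith [norm_nonneg (x t), sq_abs (r t)]
    rw [habs, abs_of_pos (hrpos t ht)]
  -- Part 1 : the pointwise inner product identity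
  have hpart1 : ∀ t ∈ I, ⟪x t, L t⟫_ℝ = (‖e t‖ ^ 2 / 4) * ‖x t‖ := by
    intro t ht
    rw [hxnorm t ht, hx, hL, yangAux_inner5]
    simp only [yangX, yangL, Eop, Aop, WithLp.equiv_symm_apply, PiLp.toLp_apply, Matrix.cons_val_zero,
      Matrix.cons_val_one, Matrix.head_cons, Matrix.cons_val_two, Matrix.tail_cons,
      Matrix.cons_val_three, Matrix.cons_val_four, inner3, PiLp.smul_apply, smul_eq_mul]
    rw [norm_sq4 (u t), norm_sq3 (e t)]
    field_simp
    ring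
  refine ⟨hpart1, ?_⟩
  -- representations of the components of L
  have hrepr0 : (fun s => L s (0 : Fin 5)) = (fun s =>
      ((e s 0^2 + e s 1^2 + e s 2^2
          - 4 * r s^2 * ((e s 0 * (-(u s 1)*u' s 0 + u s 0*u' s 1 + u s 3*u' s 2 - u s 2*u' s 3)
              + e s 1 * (-(u s 2)*u' s 0 - u s 3*u' s 1 + u s 0*u' s 2 + u s 1*u' s 3)
              + e s 2 * (-(u s 3)*u' s 0 + u s 2*u' s 1 - u s 1*u' s 2 + u s 0*u' s 3)) / (‖u s‖^2 + 1)))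
          * u s 0
        + 2 * r s^2 * (e s 0 * u' s 1 + e s 1 * u' s 2 + e s 2 * u' s 3)) / (2 * (‖u s‖^2 + 1))) := by
    funext s
    rw [hL]
    simp only [yangL, Eop, Aop, WithLp.equiv_symm_apply, PiLp.toLp_apply, Matrix.cons_val_zero,
      Matrix.cons_val_one, Matrix.head_cons, Matrix.cons_val_two, Matrix.tail_cons,
      Matrix.cons_val_three, Matrix.cons_val_four, inner3, PiLp.smul_apply, smul_eq_mul]
    rw [norm_sq3 (e s)]
    ring
  have hrepr1 : (fun s => L s (1 : Fin 5)) = (fun s =>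
      ((e s 0^2 + e s 1^2 + e s 2^2
          - 4 * r s^2 * ((e s 0 * (-(u s 1)*u' s 0 + u s 0*u' s 1 + u s 3*u' s 2 - u s 2*u' s 3)
              + e s 1 * (-(u s 2)*u' s 0 - u s 3*u' s 1 + u s 0*u' s 2 + u s 1*u' s 3)
              + e s 2 * (-(u s 3)*u' s 0 + u s 2*u' s 1 - u s 1*u' s 2 + u s 0*u' s 3)) / (‖u s‖^2 + 1)))
          * u s 1
        + 2 * r s^2 * (-(e s 0)*u' s 0 - e s 2*u' s 2 + e s 1*u' s 3)) / (2 * (‖u s‖^2 + 1))) := by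
    funext s
    rw [hL]
    simp only [yangL, Eop, Aop, WithLp.equiv_symm_apply, PiLp.toLp_apply, Matrix.cons_val_zero,
      Matrix.cons_val_one, Matrix.head_cons, Matrix.cons_val_two, Matrix.tail_cons,
      Matrix.cons_val_three, Matrix.cons_val_four, inner3, PiLp.smul_apply, smul_eq_mul]
    rw [norm_sq3 (e s)]
    ring
  have hrepr2 : (fun s => L s (2 : Fin 5)) = (fun s =>
      ((e s 0^2 + e s 1^2 + e s 2^2
          - 4 * r s^2 * ((e s 0 * (-(u s 1)*u' s 0 + u s 0*u' s 1 + u s 3*u' s 2 - u s 2*u' s 3)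
              + e s 1 * (-(u s 2)*u' s 0 - u s 3*u' s 1 + u s 0*u' s 2 + u s 1*u' s 3)
              + e s 2 * (-(u s 3)*u' s 0 + u s 2*u' s 1 - u s 1*u' s 2 + u s 0*u' s 3)) / (‖u s‖^2 + 1)))
          * u s 2
        + 2 * r s^2 * (-(e s 1)*u' s 0 + e s 2*u' s 1 - e s 0*u' s 3)) / (2 * (‖u s‖^2 + 1))) := by
    funext s
    rw [hL]
    simp only [yangL, Eop, Aop, WithLp.equiv_symm_apply, PiLp.toLp_apply, Matrix.cons_val_zero,
      Matrix.cons_val_one, Matrix.head_cons, Matrix.cons_val_two, Matrix.tail_cons,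
      Matrix.cons_val_three, Matrix.cons_val_four, inner3, PiLp.smul_apply, smul_eq_mul]
    rw [norm_sq3 (e s)]
    ring
  have hrepr3 : (fun s => L s (3 : Fin 5)) = (fun s =>
      ((e s 0^2 + e s 1^2 + e s 2^2
          - 4 * r s^2 * ((e s 0 * (-(u s 1)*u' s 0 + u s 0*u' s 1 + u s 3*u' s 2 - u s 2*u' s 3)
              + e s 1 * (-(u s 2)*u' s 0 - u s 3*u' s 1 + u s 0*u' s 2 + u s 1*u' s 3)
              + e s 2 * (-(u s 3)*u' s 0 + u s 2*u' s 1 - u s 1*u' s 2 + u s 0*u' s 3)) / (‖u s‖^2 + 1)))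
          * u s 3
        + 2 * r s^2 * (-(e s 2)*u' s 0 - e s 1*u' s 1 + e s 0*u' s 2)) / (2 * (‖u s‖^2 + 1))) := by
    funext s
    rw [hL]
    simp only [yangL, Eop, Aop, WithLp.equiv_symm_apply, PiLp.toLp_apply, Matrix.cons_val_zero,
      Matrix.cons_val_one, Matrix.head_cons, Matrix.cons_val_two, Matrix.tail_cons,
      Matrix.cons_val_three, Matrix.cons_val_four, inner3, PiLp.smul_apply, smul_eq_mul]
    rw [norm_sq3 (e s)]
    ring
  have hrepr4 : (fun s => L s (4 : Fin 5)) = (fun s =>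
      2 * r s^2 * ((e s 0 * (-(u s 1)*u' s 0 + u s 0*u' s 1 + u s 3*u' s 2 - u s 2*u' s 3)
              + e s 1 * (-(u s 2)*u' s 0 - u s 3*u' s 1 + u s 0*u' s 2 + u s 1*u' s 3)
              + e s 2 * (-(u s 3)*u' s 0 + u s 2*u' s 1 - u s 1*u' s 2 + u s 0*u' s 3)) / (‖u s‖^2 + 1)) / (‖u s‖^2 + 1)
        + (e s 0^2 + e s 1^2 + e s 2^2)/4 * (‖u s‖^2 - 1) / (‖u s‖^2 + 1)) := by
    funext s
    rw [hL]
    simp only [yangL, Eop, Aop, WithLp.equiv_symm_apply, PiLp.toLp_apply, Matrix.cons_val_zero,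
      Matrix.cons_val_one, Matrix.head_cons, Matrix.cons_val_two, Matrix.tail_cons,
      Matrix.cons_val_three, Matrix.cons_val_four, inner3, PiLp.smul_apply, smul_eq_mul]
    rw [norm_sq3 (e s)]
    ring
  -- the components of L and ‖e‖² have vanishing derivative on I
  have hd : ∀ t ∈ I,
      HasDerivAt (fun s => L s (0 : Fin 5)) 0 t ∧ HasDerivAt (fun s => L s (1 : Fin 5)) 0 t ∧
      HasDerivAt (fun s => L s (2 : Fin 5)) 0 t ∧ HasDerivAt (fun s => L s (3 : Fin 5)) 0 t ∧
      HasDerivAt (fun s => L s (4 : Fin 5)) 0 t ∧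
      HasDerivAt (fun s => e s 0^2 + e s 1^2 + e s 2^2) 0 t := by
    intro t ht
    have ha : ∀ i : Fin 4, HasDerivAt (fun s => u s i) (u' t i) t := fun i =>
      ((EuclideanSpace.proj i : EuclideanSpace ℝ (Fin 4) →L[ℝ] ℝ).hasFDerivAt.comp_hasDerivAt t (hu t ht) :)
    have hb : ∀ i : Fin 4, HasDerivAt (fun s => u' s i) (u'' t i) t := fun i =>
      ((EuclideanSpace.proj i : EuclideanSpace ℝ (Fin 4) →L[ℝ] ℝ).hasFDerivAt.comp_hasDerivAt t (hu' t ht) :)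
    have hE : ∀ j : Fin 3, HasDerivAt (fun s => e s j) (e' t j) t := fun j =>
      ((EuclideanSpace.proj j : EuclideanSpace ℝ (Fin 3) →L[ℝ] ℝ).hasFDerivAt.comp_hasDerivAt t (he t ht) :)
    have hn : HasDerivAt (fun s => (‖u s‖^2 : ℝ))
        (2*(u t 0*u' t 0 + u t 1*u' t 1 + u t 2*u' t 2 + u t 3*u' t 3)) t := by
      have hfun : (fun s => (‖u s‖^2 : ℝ)) = fun s => u s 0^2 + u s 1^2 + u s 2^2 + u s 3^2 :=
        funext fun s => norm_sq4 (u s)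
      rw [hfun]
      exact ((((ha 0).pow 2).add ((ha 1).pow 2)).add ((ha 2).pow 2)).add ((ha 3).pow 2)
        |>.congr_deriv (by push_cast; ring)
    have hc0 : u'' t 0 = -(2*(u' t 0^2+u' t 1^2+u' t 2^2+u' t 3^2)/(‖u t‖^2+1))*u t 0
        + (4*(u t 0*u' t 0+u t 1*u' t 1+u t 2*u' t 2+u t 3*u' t 3)/(‖u t‖^2+1))*u' t 0
        - (2*r' t/r t)*u' t 0 + (1/(2*r t^2))*(e t 0*u' t 1 + e t 1*u' t 2 + e t 2*u' t 3) := by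
      have h := congrArg (fun v : EuclideanSpace ℝ (Fin 4) => v 0) (heq1 t ht)
      simp only [PiLp.add_apply, PiLp.sub_apply, PiLp.smul_apply, smul_eq_mul, Eop,
        WithLp.equiv_symm_apply, PiLp.toLp_apply, Matrix.cons_val_zero, Matrix.cons_val_one,
        Matrix.head_cons, Matrix.cons_val_two, Matrix.tail_cons, Matrix.cons_val_three] at h
      rw [norm_sq4 (u' t), inner4 (u t) (u' t)] at h
      linarith
    have hc1 : u'' t 1 = -(2*(u' t 0^2+u' t 1^2+u' t 2^2+u' t 3^2)/(‖u t‖^2+1))*u t 1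
        + (4*(u t 0*u' t 0+u t 1*u' t 1+u t 2*u' t 2+u t 3*u' t 3)/(‖u t‖^2+1))*u' t 1
        - (2*r' t/r t)*u' t 1 + (1/(2*r t^2))*(-(e t 0)*u' t 0 - e t 2*u' t 2 + e t 1*u' t 3) := by
      have h := congrArg (fun v : EuclideanSpace ℝ (Fin 4) => v 1) (heq1 t ht)
      simp only [PiLp.add_apply, PiLp.sub_apply, PiLp.smul_apply, smul_eq_mul, Eop,
        WithLp.equiv_symm_apply, PiLp.toLp_apply, Matrix.cons_val_zero, Matrix.cons_val_one,
        Matrix.head_cons, Matrix.cons_val_two, Matrix.tail_cons, Matrix.cons_val_three] at h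
      rw [norm_sq4 (u' t), inner4 (u t) (u' t)] at h
      linarith
    have hc2 : u'' t 2 = -(2*(u' t 0^2+u' t 1^2+u' t 2^2+u' t 3^2)/(‖u t‖^2+1))*u t 2
        + (4*(u t 0*u' t 0+u t 1*u' t 1+u t 2*u' t 2+u t 3*u' t 3)/(‖u t‖^2+1))*u' t 2
        - (2*r' t/r t)*u' t 2 + (1/(2*r t^2))*(-(e t 1)*u' t 0 + e t 2*u' t 1 - e t 0*u' t 3) := by
      have h := congrArg (fun v : EuclideanSpace ℝ (Fin 4) => v 2) (heq1 t ht)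
      simp only [PiLp.add_apply, PiLp.sub_apply, PiLp.smul_apply, smul_eq_mul, Eop,
        WithLp.equiv_symm_apply, PiLp.toLp_apply, Matrix.cons_val_zero, Matrix.cons_val_one,
        Matrix.head_cons, Matrix.cons_val_two, Matrix.tail_cons, Matrix.cons_val_three] at h
      rw [norm_sq4 (u' t), inner4 (u t) (u' t)] at h
      linarith
    have hc3 : u'' t 3 = -(2*(u' t 0^2+u' t 1^2+u' t 2^2+u' t 3^2)/(‖u t‖^2+1))*u t 3
        + (4*(u t 0*u' t 0+u t 1*u' t 1+u t 2*u' t 2+u t 3*u' t 3)/(‖u t‖^2+1))*u' t 3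
        - (2*r' t/r t)*u' t 3 + (1/(2*r t^2))*(-(e t 2)*u' t 0 - e t 1*u' t 1 + e t 0*u' t 2) := by
      have h := congrArg (fun v : EuclideanSpace ℝ (Fin 4) => v 3) (heq1 t ht)
      simp only [PiLp.add_apply, PiLp.sub_apply, PiLp.smul_apply, smul_eq_mul, Eop,
        WithLp.equiv_symm_apply, PiLp.toLp_apply, Matrix.cons_val_zero, Matrix.cons_val_one,
        Matrix.head_cons, Matrix.cons_val_two, Matrix.tail_cons, Matrix.cons_val_three] at h
      rw [norm_sq4 (u' t), inner4 (u t) (u' t)] at h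
      linarith
    have hep0 : e' t 0 = -2*(-((-(u t 3)*u' t 0 + u t 2*u' t 1 - u t 1*u' t 2 + u t 0*u' t 3)/(‖u t‖^2+1))*e t 1 + ((-(u t 2)*u' t 0 - u t 3*u' t 1 + u t 0*u' t 2 + u t 1*u' t 3)/(‖u t‖^2+1))*e t 2) := by
      have h := congrArg (fun v : EuclideanSpace ℝ (Fin 3) => v 0) (heq3 t ht)
      simp only [Bop, Aop, PiLp.smul_apply, smul_eq_mul, WithLp.equiv_symm_apply, PiLp.toLp_apply,
        Matrix.cons_val_zero, Matrix.cons_val_one, Matrix.head_cons, Matrix.cons_val_two,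
        Matrix.tail_cons] at h
      rw [h]
      field_simp
      try ring
    have hep1 : e' t 1 = -2*(((-(u t 3)*u' t 0 + u t 2*u' t 1 - u t 1*u' t 2 + u t 0*u' t 3)/(‖u t‖^2+1))*e t 0 - ((-(u t 1)*u' t 0 + u t 0*u' t 1 + u t 3*u' t 2 - u t 2*u' t 3)/(‖u t‖^2+1))*e t 2) := by
      have h := congrArg (fun v : EuclideanSpace ℝ (Fin 3) => v 1) (heq3 t ht)
      simp only [Bop, Aop, PiLp.smul_apply, smul_eq_mul, WithLp.equiv_symm_apply, PiLp.toLp_apply,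
        Matrix.cons_val_zero, Matrix.cons_val_one, Matrix.head_cons, Matrix.cons_val_two,
        Matrix.tail_cons] at h
      rw [h]
      field_simp
      try ring
    have hep2 : e' t 2 = -2*(-((-(u t 2)*u' t 0 - u t 3*u' t 1 + u t 0*u' t 2 + u t 1*u' t 3)/(‖u t‖^2+1))*e t 0 + ((-(u t 1)*u' t 0 + u t 0*u' t 1 + u t 3*u' t 2 - u t 2*u' t 3)/(‖u t‖^2+1))*e t 1) := by
      have h := congrArg (fun v : EuclideanSpace ℝ (Fin 3) => v 2) (heq3 t ht)
      simp only [Bop, Aop, PiLp.smul_apply, smul_eq_mul, WithLp.equiv_symm_apply, PiLp.toLp_apply,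
        Matrix.cons_val_zero, Matrix.cons_val_one, Matrix.head_cons, Matrix.cons_val_two,
        Matrix.tail_cons] at h
      rw [h]
      field_simp
      try ring
    refine ⟨?_, ?_, ?_, ?_, ?_, ?_⟩
    · rw [hrepr0]
      exact yangAux_comp0 (fun s => u s 0) (fun s => u s 1) (fun s => u s 2) (fun s => u s 3)
        (fun s => u' s 0) (fun s => u' s 1) (fun s => u' s 2) (fun s => u' s 3)
        r (fun s => ‖u s‖^2) (fun s => e s 0) (fun s => e s 1) (fun s => e s 2) t
        (u'' t 0) (u'' t 1) (u'' t 2) (u'' t 3) (r' t) (e' t 0) (e' t 1) (e' t 2) _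
        (ha 0) (ha 1) (ha 2) (ha 3) (hb 0) (hb 1) (hb 2) (hb 3) (hr t ht) hn
        (hE 0) (hE 1) (hE 2) (hrpos t ht).ne' (hQne t) rfl hc0 hc1 hc2 hc3 hep0 hep1 hep2
    · rw [hrepr1]
      exact yangAux_comp1 (fun s => u s 0) (fun s => u s 1) (fun s => u s 2) (fun s => u s 3)
        (fun s => u' s 0) (fun s => u' s 1) (fun s => u' s 2) (fun s => u' s 3)
        r (fun s => ‖u s‖^2) (fun s => e s 0) (fun s => e s 1) (fun s => e s 2) t
        (u'' t 0) (u'' t 1) (u'' t 2) (u'' t 3) (r' t) (e' t 0) (e' t 1) (e' t 2) _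
        (ha 0) (ha 1) (ha 2) (ha 3) (hb 0) (hb 1) (hb 2) (hb 3) (hr t ht) hn
        (hE 0) (hE 1) (hE 2) (hrpos t ht).ne' (hQne t) rfl hc0 hc1 hc2 hc3 hep0 hep1 hep2
    · rw [hrepr2]
      exact yangAux_comp2 (fun s => u s 0) (fun s => u s 1) (fun s => u s 2) (fun s => u s 3)
        (fun s => u' s 0) (fun s => u' s 1) (fun s => u' s 2) (fun s => u' s 3)
        r (fun s => ‖u s‖^2) (fun s => e s 0) (fun s => e s 1) (fun s => e s 2) t
        (u'' t 0) (u'' t 1) (u'' t 2) (u'' t 3) (r' t) (e' t 0) (e' t 1) (e' t 2) _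
        (ha 0) (ha 1) (ha 2) (ha 3) (hb 0) (hb 1) (hb 2) (hb 3) (hr t ht) hn
        (hE 0) (hE 1) (hE 2) (hrpos t ht).ne' (hQne t) rfl hc0 hc1 hc2 hc3 hep0 hep1 hep2
    · rw [hrepr3]
      exact yangAux_comp3 (fun s => u s 0) (fun s => u s 1) (fun s => u s 2) (fun s => u s 3)
        (fun s => u' s 0) (fun s => u' s 1) (fun s => u' s 2) (fun s => u' s 3)
        r (fun s => ‖u s‖^2) (fun s => e s 0) (fun s => e s 1) (fun s => e s 2) t
        (u'' t 0) (u'' t 1) (u'' t 2) (u'' t 3) (r' t) (e' t 0) (e' t 1) (e' t 2) _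
        (ha 0) (ha 1) (ha 2) (ha 3) (hb 0) (hb 1) (hb 2) (hb 3) (hr t ht) hn
        (hE 0) (hE 1) (hE 2) (hrpos t ht).ne' (hQne t) rfl hc0 hc1 hc2 hc3 hep0 hep1 hep2
    · rw [hrepr4]
      exact yangAux_comp4 (fun s => u s 0) (fun s => u s 1) (fun s => u s 2) (fun s => u s 3)
        (fun s => u' s 0) (fun s => u' s 1) (fun s => u' s 2) (fun s => u' s 3)
        r (fun s => ‖u s‖^2) (fun s => e s 0) (fun s => e s 1) (fun s => e s 2) t
        (u'' t 0) (u'' t 1) (u'' t 2) (u'' t 3) (r' t) (e' t 0) (e' t 1) (e' t 2) _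
        (ha 0) (ha 1) (ha 2) (ha 3) (hb 0) (hb 1) (hb 2) (hb 3) (hr t ht) hn
        (hE 0) (hE 1) (hE 2) (hrpos t ht).ne' (hQne t) rfl hc0 hc1 hc2 hc3 hep0 hep1 hep2
    · refine ((((hE 0).pow 2).add ((hE 1).pow 2)).add ((hE 2).pow 2)).congr_deriv ?_
      rw [hep0, hep1, hep2]
      push_cast
      field_simp
      try ring
  -- constancy of L and of ‖e‖²
  have hLconst : ∀ s ∈ I, ∀ t ∈ I, L s = L t := by
    intro s hs t ht
    ext i
    fin_cases i
    exacts [yangAux_const hIopen hconv (fun y hy => (hd y hy).1) hs ht,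
      yangAux_const hIopen hconv (fun y hy => (hd y hy).2.1) hs ht,
      yangAux_const hIopen hconv (fun y hy => (hd y hy).2.2.1) hs ht,
      yangAux_const hIopen hconv (fun y hy => (hd y hy).2.2.2.1) hs ht,
      yangAux_const hIopen hconv (fun y hy => (hd y hy).2.2.2.2.1) hs ht]
  have hE2const : ∀ s ∈ I, ∀ t ∈ I, ‖e s‖^2 = ‖e t‖^2 := by
    intro s hs t ht
    rw [norm_sq3 (e s), norm_sq3 (e t)]
    exact yangAux_const hIopen hconv (fun y hy => (hd y hy).2.2.2.2.2) hs ht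
  -- Part 2
  intro hLne s hs t ht
  have hratio : ∀ w ∈ I, ⟪x w, L w⟫_ℝ / (‖x w‖ * ‖L w‖) = ‖e w‖ ^ 2 / (4 * ‖L w‖) := by
    intro w hw
    have hLn : ‖L w‖ ≠ 0 := norm_ne_zero_iff.2 (hLne w hw)
    rw [hpart1 w hw, hxnorm w hw]
    have hrn : r w ≠ 0 := (hrpos w hw).ne'
    field_simp
  refine ⟨?_, hratio t ht⟩
  rw [hratio s hs, hratio t ht, hE2const s hs t ht, hLconst s hs t ht]


end
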